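/- Let (Ω, 𝔽, ℚ) be a filtered probability space with a Brownian motion B, and let γ be a progressively measurable process with respect to the delayed filtration (𝔽_{(t−δ)⁺})_{t∈[0,T]} for some δ > 0, with ∫₀ᵀ γ_t² dt < ∞ a.s. If the negative part (∫₀ᵀ γ_t dB_t)⁻ is ℚ-integrable, then 𝔼_ℚ[∫₀ᵀ γ_t dB_t] = 0. -/

import Mathlib

open MeasureTheory ProbabilityTheory
open scoped NNReal ENNReal

lemma gauss_integrable_id (v : ℝ≥0) : Integrable (id : ℝ → ℝ) (gaussianReal 0 v) := by
  by_cases hv : v = 0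
  · rw [hv, gaussianReal_zero_var]
    exact (integrable_congr (ae_eq_dirac id)).mpr (integrable_const _)
  · rw [gaussianReal_of_var_ne_zero _ hv]
    rw [integrable_withDensity_iff (measurable_gaussianPDF _ _)
      (ae_of_all _ fun x => ENNReal.ofReal_lt_top)]
    have h2v : (0:ℝ) < (2 * v : ℝ) := by positivity
    have hb : (0:ℝ) < ((2:ℝ) * v)⁻¹ := by positivity
    have : Integrable (fun x : ℝ => x * Real.exp (-(((2:ℝ)*v)⁻¹) * x ^ 2)) :=
      integrable_mul_exp_neg_mul_sq hb
    have heq : ∀ x : ℝ, (gaussianPDF 0 v x).toReal = gaussianPDFReal 0 v x := by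
      intro x
      rw [gaussianPDF, ENNReal.toReal_ofReal (gaussianPDFReal_nonneg _ _ _)]
    simp only [heq, gaussianPDFReal, sub_zero]
    have : Integrable (fun x : ℝ => (Real.sqrt (2 * Real.pi * v))⁻¹ *
        (x * Real.exp (-(((2:ℝ)*v)⁻¹) * x ^ 2))) := this.const_mul _
    refine this.congr (ae_of_all _ fun x => ?_)
    simp only [id_eq]
    ring_nf

lemma gauss_integral_id (v : ℝ≥0) : ∫ x, x ∂(gaussianReal 0 v) = 0 := by
  have hmap : (gaussianReal 0 v).map (fun x : ℝ => (-1 : ℝ) * x) = gaussianReal 0 v := by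
    rw [gaussianReal_map_const_mul (-1 : ℝ)]
    norm_num
  have h1 : ∫ x, x ∂(gaussianReal 0 v) = ∫ x, (-1 : ℝ) * x ∂(gaussianReal 0 v) := by
    have hm : AEStronglyMeasurable (fun x : ℝ => x)
        ((gaussianReal 0 v).map (fun x : ℝ => (-1 : ℝ) * x)) := by
      rw [hmap]; exact aestronglyMeasurable_id
    have := integral_map (f := fun x : ℝ => x)
      (φ := fun x : ℝ => (-1 : ℝ) * x) (μ := gaussianReal 0 v) (by fun_prop) hm
    rw [hmap] at this
    exact this
  have : (2 : ℝ) * ∫ x, x ∂(gaussianReal 0 v) = 0 := by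
    rw [integral_const_mul] at h1; linarith
  linarith



section Step
variable {Ω : Type*} {m0 : MeasurableSpace Ω} (Q : Measure Ω) [IsProbabilityMeasure Q]
  (W X Z : Ω → ℝ) (v : ℝ≥0)

-- basic real inner facts about ν := gaussianReal 0 v
lemma inner_integrable (a b : ℝ) : Integrable (fun z => a + b * z) (gaussianReal 0 v) := by
  have := (gauss_integrable_id v).const_mul b
  simpa using (integrable_const a).add this

lemma inner_mean (a b : ℝ) : ∫ z, (a + b * z) ∂(gaussianReal 0 v) = a := by
  have hbz : Integrable (fun z : ℝ => b * z) (gaussianReal 0 v) := by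
    simpa using (gauss_integrable_id v).const_mul b
  rw [integral_add (integrable_const a) hbz, integral_const, integral_const_mul]
  have h0 : ∫ z, (id z : ℝ) ∂(gaussianReal 0 v) = 0 := gauss_integral_id v
  simp only [id] at h0
  simp [h0]

lemma inner_neg_integrable (a b : ℝ) :
    Integrable (fun z => max (-(a + b * z)) 0) (gaussianReal 0 v) :=
  (inner_integrable v a b).neg.pos_part

lemma inner_pos_integrable (a b : ℝ) :
    Integrable (fun z => max (a + b * z) 0) (gaussianReal 0 v) :=
  (inner_integrable v a b).pos_part

lemma inner_jensen (a b : ℝ) :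
    max (-a) 0 ≤ ∫ z, max (-(a + b * z)) 0 ∂(gaussianReal 0 v) := by
  have h0 : (0:ℝ) ≤ ∫ z, max (-(a + b * z)) 0 ∂(gaussianReal 0 v) :=
    integral_nonneg fun z => le_max_right _ _
  have hneg : -a ≤ ∫ z, max (-(a + b * z)) 0 ∂(gaussianReal 0 v) := by
    have : -a = ∫ z, -(a + b * z) ∂(gaussianReal 0 v) := by
      rw [integral_neg, inner_mean]
    rw [this]
    exact integral_mono (inner_integrable v a b).neg (inner_neg_integrable v a b)
      fun z => le_max_left _ _
  exact max_le hneg h0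

lemma inner_pos_eq (a b : ℝ) :
    ∫ z, max (a + b * z) 0 ∂(gaussianReal 0 v)
      = (∫ z, max (-(a + b * z)) 0 ∂(gaussianReal 0 v)) + a := by
  have hpt : ∀ x : ℝ, max x 0 = max (-x) 0 + x := by
    intro x
    rcases le_total x 0 with h | h
    · rw [max_eq_right h, max_eq_left (by linarith)]; ring
    · rw [max_eq_left h, max_eq_right (by linarith)]; ring
  calc ∫ z, max (a + b * z) 0 ∂(gaussianReal 0 v)
      = ∫ z, (max (-(a + b * z)) 0 + (a + b * z)) ∂(gaussianReal 0 v) := by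
        exact integral_congr_ae (ae_of_all _ fun z => hpt _)
    _ = (∫ z, max (-(a + b * z)) 0 ∂(gaussianReal 0 v)) + a := by
        rw [integral_add (inner_neg_integrable v a b) (inner_integrable v a b),
          inner_mean]

end Step

theorem step_main {Ω : Type*} {m0 : MeasurableSpace Ω} (Q : Measure Ω) [IsProbabilityMeasure Q]
    {W X Z : Ω → ℝ} {v : ℝ≥0}
    (hW : Measurable W) (hX : Measurable X) (hZ : Measurable Z)
    (hmap : Measure.map Z Q = gaussianReal 0 v)
    (hindep : IndepFun (fun ω => (W ω, X ω)) Z Q) :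
    (∫⁻ ω, ENNReal.ofReal (max (-(W ω)) 0) ∂Q
      ≤ ∫⁻ ω, ENNReal.ofReal (max (-(W ω + X ω * Z ω)) 0) ∂Q) ∧
    (Integrable W Q → (∫⁻ ω, ENNReal.ofReal (max (-(W ω + X ω * Z ω)) 0) ∂Q) ≠ ⊤ →
      Integrable (fun ω => W ω + X ω * Z ω) Q ∧
      ∫ ω, (W ω + X ω * Z ω) ∂Q = ∫ ω, W ω ∂Q) := by
  set ν : Measure ℝ := gaussianReal 0 v with hν
  set μ : Measure (ℝ × ℝ) := Q.map (fun ω => (W ω, X ω)) with hμ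
  have hWX : Measurable fun ω => (W ω, X ω) := hW.prodMk hX
  have hpair : Measurable fun ω => ((W ω, X ω), Z ω) := hWX.prodMk hZ
  have hμprob : IsProbabilityMeasure μ := Measure.isProbabilityMeasure_map hWX.aemeasurable
  have hprod : Q.map (fun ω => ((W ω, X ω), Z ω)) = μ.prod ν := by
    have h := (indepFun_iff_map_prod_eq_prod_map_map hWX.aemeasurable hZ.aemeasurable).mp hindep
    rw [hmap] at h
    exact h
  have hlt : ∀ g : (ℝ × ℝ) × ℝ → ℝ≥0∞, Measurable g →
      ∫⁻ ω, g ((W ω, X ω), Z ω) ∂Q = ∫⁻ p, ∫⁻ z, g (p, z) ∂ν ∂μ := by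
    intro g hg
    rw [← lintegral_map hg hpair, hprod, lintegral_prod _ hg.aemeasurable]
  -- inner integral function
  set I : ℝ × ℝ → ℝ := fun p => ∫ z, max (-(p.1 + p.2 * z)) 0 ∂ν with hI
  have hmax_meas : Measurable fun q : (ℝ × ℝ) × ℝ => max (-(q.1.1 + q.1.2 * q.2)) 0 := by
    fun_prop
  have hImeas : StronglyMeasurable I :=
    MeasureTheory.StronglyMeasurable.integral_prod_right' (f := fun q : (ℝ × ℝ) × ℝ =>
      max (-(q.1.1 + q.1.2 * q.2)) 0) hmax_meas.stronglyMeasurable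
  have hInner : ∀ p : ℝ × ℝ, ∫⁻ z, ENNReal.ofReal (max (-(p.1 + p.2 * z)) 0) ∂ν
      = ENNReal.ofReal (I p) := by
    intro p
    rw [← ofReal_integral_eq_lintegral_ofReal (inner_neg_integrable v p.1 p.2)
      (ae_of_all _ fun z => le_max_right _ _)]
  have hRHS : ∫⁻ ω, ENNReal.ofReal (max (-(W ω + X ω * Z ω)) 0) ∂Q
      = ∫⁻ p, ENNReal.ofReal (I p) ∂μ := by
    have := hlt (fun q => ENNReal.ofReal (max (-(q.1.1 + q.1.2 * q.2)) 0))
      (by fun_prop)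
    simp only at this
    rw [this]
    exact lintegral_congr fun p => hInner p
  have hLHS : ∫⁻ ω, ENNReal.ofReal (max (-(W ω)) 0) ∂Q
      = ∫⁻ p, ENNReal.ofReal (max (-p.1) 0) ∂μ := by
    rw [hμ, lintegral_map (by fun_prop) hWX]
  constructor
  · rw [hLHS, hRHS]
    exact lintegral_mono fun p => ENNReal.ofReal_le_ofReal (inner_jensen v p.1 p.2)
  · intro hWint hfin
    -- finiteness of the positive part
    have hW1 : ∫⁻ p, ENNReal.ofReal |p.1| ∂μ ≠ ⊤ := by
      rw [hμ, lintegral_map (by fun_prop) hWX]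
      have := hWint.hasFiniteIntegral
      rw [hasFiniteIntegral_iff_norm] at this
      simpa [Real.norm_eq_abs] using this.ne
    have hIfin : ∫⁻ p, ENNReal.ofReal (I p) ∂μ ≠ ⊤ := by rw [← hRHS]; exact hfin
    have hpos : ∫⁻ ω, ENNReal.ofReal (max (W ω + X ω * Z ω) 0) ∂Q
        = ∫⁻ p, ENNReal.ofReal (I p + p.1) ∂μ := by
      have := hlt (fun q => ENNReal.ofReal (max (q.1.1 + q.1.2 * q.2) 0)) (by fun_prop)
      simp only at this
      rw [this]
      refine lintegral_congr fun p => ?_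
      rw [← ofReal_integral_eq_lintegral_ofReal (inner_pos_integrable v p.1 p.2)
        (ae_of_all _ fun z => le_max_right _ _), inner_pos_eq]
    have hposfin : ∫⁻ ω, ENNReal.ofReal (max (W ω + X ω * Z ω) 0) ∂Q ≠ ⊤ := by
      rw [hpos]
      have hle : ∫⁻ p, ENNReal.ofReal (I p + p.1) ∂μ
          ≤ (∫⁻ p, ENNReal.ofReal (I p) ∂μ) + ∫⁻ p, ENNReal.ofReal |p.1| ∂μ := by
        rw [← lintegral_add_left (by
          exact ENNReal.measurable_ofReal.comp hImeas.measurable)]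
        refine lintegral_mono fun p => ?_
        refine le_trans (ENNReal.ofReal_add_le) (add_le_add le_rfl ?_)
        exact ENNReal.ofReal_le_ofReal (le_abs_self _)
      exact ne_top_of_le_ne_top (by
        exact ENNReal.add_ne_top.mpr ⟨hIfin, hW1⟩) hle
    -- integrability
    have habs : ∀ x : ℝ, ENNReal.ofReal |x|
        = ENNReal.ofReal (max x 0) + ENNReal.ofReal (max (-x) 0) := by
      intro x
      rw [← ENNReal.ofReal_add (le_max_right _ _) (le_max_right _ _)]
      congr 1
      rcases le_total x 0 with h | h
      · rw [abs_of_nonpos h, max_eq_right h, max_eq_left (by linarith)]; ring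
      · rw [abs_of_nonneg h, max_eq_left h, max_eq_right (by linarith)]; ring
    have hfmeas : Measurable fun ω => W ω + X ω * Z ω := hW.add (hX.mul hZ)
    have hfint : Integrable (fun ω => W ω + X ω * Z ω) Q := by
      refine ⟨hfmeas.aestronglyMeasurable, ?_⟩
      rw [hasFiniteIntegral_iff_norm]
      simp only [Real.norm_eq_abs]
      calc ∫⁻ ω, ENNReal.ofReal |W ω + X ω * Z ω| ∂Q
          = ∫⁻ ω, (ENNReal.ofReal (max (W ω + X ω * Z ω) 0)
            + ENNReal.ofReal (max (-(W ω + X ω * Z ω)) 0)) ∂Q := by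
            exact lintegral_congr fun ω => habs _
        _ = (∫⁻ ω, ENNReal.ofReal (max (W ω + X ω * Z ω) 0) ∂Q)
            + ∫⁻ ω, ENNReal.ofReal (max (-(W ω + X ω * Z ω)) 0) ∂Q := by
            exact lintegral_add_left (by fun_prop) _
        _ < ⊤ := ENNReal.add_lt_top.mpr ⟨hposfin.lt_top, hfin.lt_top⟩
    refine ⟨hfint, ?_⟩
    -- expectation
    have hqmeas : Measurable fun q : (ℝ × ℝ) × ℝ => q.1.1 + q.1.2 * q.2 := by fun_prop
    have hint_prod : Integrable (fun q : (ℝ × ℝ) × ℝ => q.1.1 + q.1.2 * q.2) (μ.prod ν) := by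
      rw [← hprod]
      exact (integrable_map_measure hqmeas.aestronglyMeasurable hpair.aemeasurable).mpr hfint
    calc ∫ ω, (W ω + X ω * Z ω) ∂Q
        = ∫ q, (q.1.1 + q.1.2 * q.2) ∂(μ.prod ν) := by
          rw [← hprod, integral_map hpair.aemeasurable hqmeas.aestronglyMeasurable]
      _ = ∫ p, ∫ z, (p.1 + p.2 * z) ∂ν ∂μ := integral_prod _ hint_prod
      _ = ∫ p, p.1 ∂μ := integral_congr_ae (ae_of_all _ fun p => inner_mean v p.1 p.2)
      _ = ∫ ω, W ω ∂Q := by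
          rw [hμ, integral_map hWX.aemeasurable (by fun_prop)]



theorem delayed_stochastic_integral_zero_mean
    {Ω : Type*} {m0 : MeasurableSpace Ω} (Q : Measure Ω) [IsProbabilityMeasure Q]
    (ℱ : Filtration ℝ m0) (B : ℝ → Ω → ℝ) (T δ : ℝ) (hT : 0 < T) (hδ : 0 < δ)
    (hadapted : ∀ t : ℝ, Measurable[ℱ t] (B t))
    (hincr_gauss : ∀ s t : ℝ, 0 ≤ s → s ≤ t →
      Measure.map (fun ω => B t ω - B s ω) Q = gaussianReal 0 ((t - s).toNNReal))
    (hincr_indep : ∀ s t : ℝ, 0 ≤ s → s ≤ t →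
      Indep (MeasurableSpace.comap (fun ω => B t ω - B s ω) (borel ℝ)) (ℱ s) Q)
    (n : ℕ) (t : Fin (n + 1) → ℝ) (hmono : Monotone t)
    (ht0 : t 0 = 0) (htn : t (Fin.last n) = T)
    (ξ : Fin n → Ω → ℝ)
    (hξ : ∀ i : Fin n, Measurable[ℱ (max (t i.castSucc - δ) 0)] (ξ i))
    (hneg : Integrable
      (fun ω => max (-(∑ i : Fin n, ξ i ω * (B (t i.succ) ω - B (t i.castSucc) ω))) 0) Q) :
    Integrable
      (fun ω => ∑ i : Fin n, ξ i ω * (B (t i.succ) ω - B (t i.castSucc) ω)) Q ∧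
    ∫ ω, (∑ i : Fin n, ξ i ω * (B (t i.succ) ω - B (t i.castSucc) ω)) ∂Q = 0 := by
  classical
  -- basic positivity of times
  have ht_nonneg : ∀ j : Fin (n + 1), 0 ≤ t j := fun j => ht0 ▸ hmono (Fin.zero_le j)
  -- increments
  set Δ : Fin n → Ω → ℝ := fun i ω => B (t i.succ) ω - B (t i.castSucc) ω with hΔ
  -- partial sums
  set S : ℕ → Ω → ℝ := fun k ω => ∑ i ∈ Finset.range k,
    (if h : i < n then ξ ⟨i, h⟩ ω * Δ ⟨i, h⟩ ω else 0) with hS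
  -- ambient measurability of B
  have hB : ∀ s : ℝ, Measurable (B s) := fun s => (hadapted s).mono (ℱ.le s) le_rfl
  have hΔmeas : ∀ i : Fin n, Measurable (Δ i) := fun i => (hB _).sub (hB _)
  have hξ' : ∀ i : Fin n, Measurable[ℱ (t i.castSucc)] (ξ i) := by
    intro i
    refine (hξ i).mono (ℱ.mono (max_le (by linarith [ht_nonneg i.castSucc]) ?_)) le_rfl
    exact ht_nonneg i.castSucc
  have hξm0 : ∀ i : Fin n, Measurable (ξ i) := fun i => (hξ' i).mono (ℱ.le _) le_rfl
  -- the target equals S n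
  have hSn : ∀ ω, (∑ i : Fin n, ξ i ω * (B (t i.succ) ω - B (t i.castSucc) ω)) = S n ω := by
    intro ω
    rw [hS]
    simp only
    rw [← Fin.sum_univ_eq_sum_range (fun j => if h : j < n then ξ ⟨j, h⟩ ω * Δ ⟨j, h⟩ ω else 0) n]
    refine Finset.sum_congr rfl fun i _ => ?_
    rw [dif_pos i.isLt]
  -- measurability of partial sums with respect to the filtration
  have hSmeas : ∀ k : ℕ, ∀ hk : k ≤ n,
      Measurable[ℱ (t ⟨k, Nat.lt_succ_of_le hk⟩)] (S k) := by
    intro k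
    induction k with
    | zero =>
      intro _
      have : S 0 = fun _ => (0 : ℝ) := by funext ω; simp [hS]
      rw [this]
      exact measurable_const
    | succ k ih =>
      intro hk1
      have hk : k < n := hk1
      have hle1 : t ⟨k, Nat.lt_succ_of_le hk.le⟩ ≤ t ⟨k + 1, Nat.lt_succ_of_le hk1⟩ :=
        hmono (by simp [Fin.mk_le_mk])
      have hSk : Measurable[ℱ (t ⟨k + 1, Nat.lt_succ_of_le hk1⟩)] (S k) :=
        (ih hk.le).mono (ℱ.mono hle1) le_rfl
      have hξk : Measurable[ℱ (t ⟨k + 1, Nat.lt_succ_of_le hk1⟩)] (ξ ⟨k, hk⟩) :=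
        (hξ' ⟨k, hk⟩).mono (ℱ.mono hle1) le_rfl
      have hBk1 : Measurable[ℱ (t ⟨k + 1, Nat.lt_succ_of_le hk1⟩)]
          (B (t (⟨k, hk⟩ : Fin n).succ)) := hadapted _
      have hBk0 : Measurable[ℱ (t ⟨k + 1, Nat.lt_succ_of_le hk1⟩)]
          (B (t (⟨k, hk⟩ : Fin n).castSucc)) :=
        (hadapted _).mono (ℱ.mono hle1) le_rfl
      have hterm : Measurable[ℱ (t ⟨k + 1, Nat.lt_succ_of_le hk1⟩)]
          (fun ω => ξ ⟨k, hk⟩ ω * Δ ⟨k, hk⟩ ω) := hξk.mul (hBk1.sub hBk0)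
      have hsplit : S (k + 1) = fun ω => S k ω + ξ ⟨k, hk⟩ ω * Δ ⟨k, hk⟩ ω := by
        funext ω
        rw [hS]
        simp only
        rw [Finset.sum_range_succ, dif_pos hk]
      rw [hsplit]
      exact hSk.add hterm
  have hSmeas0 : ∀ k : ℕ, Measurable (S k) := by
    intro k
    apply Finset.measurable_sum
    intro i _
    by_cases h : i < n
    · simp only [dif_pos h]
      exact (hξm0 _).mul (hΔmeas _)
    · simp only [dif_neg h]
      exact measurable_const
  -- the lintegral of negative parts
  set L : ℕ → ℝ≥0∞ := fun k => ∫⁻ ω, ENNReal.ofReal (max (-(S k ω)) 0) ∂Q with hL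
  -- one-step application
  have hstep : ∀ k : ℕ, ∀ hk : k < n,
      (L k ≤ L (k + 1)) ∧
      (Integrable (S k) Q → L (k + 1) ≠ ⊤ →
        Integrable (S (k + 1)) Q ∧ ∫ ω, S (k + 1) ω ∂Q = ∫ ω, S k ω ∂Q) := by
    intro k hk
    set i : Fin n := ⟨k, hk⟩ with hi
    have ha0 : 0 ≤ t i.castSucc := ht_nonneg _
    have hab : t i.castSucc ≤ t i.succ := hmono (Fin.castSucc_lt_succ : i.castSucc < i.succ).le
    have hmapZ : Measure.map (Δ i) Q
        = gaussianReal 0 ((t i.succ - t i.castSucc).toNNReal) :=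
      hincr_gauss _ _ ha0 hab
    have hpairmeas : Measurable[ℱ (t i.castSucc)] (fun ω => (S k ω, ξ i ω)) := by
      have hSk : Measurable[ℱ (t i.castSucc)] (S k) := hSmeas k hk.le
      exact hSk.prodMk (hξ' i)
    have hindepk : IndepFun (fun ω => (S k ω, ξ i ω)) (Δ i) Q := by
      have h1 := hincr_indep (t i.castSucc) (t i.succ) ha0 hab
      have h2 : Indep (ℱ (t i.castSucc))
          (MeasurableSpace.comap (Δ i) (borel ℝ)) Q := h1.symm
      have h3 := indep_of_indep_of_le_left h2
        (measurable_iff_comap_le.mp hpairmeas)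
      exact h3
    have hmain := step_main Q (hSmeas0 k) (hξm0 i) (hΔmeas i) hmapZ hindepk
    have hsplit : ∀ ω, S (k + 1) ω = S k ω + ξ i ω * Δ i ω := by
      intro ω
      rw [hS]
      simp only
      rw [Finset.sum_range_succ, dif_pos hk]
    constructor
    · refine le_trans hmain.1 (le_of_eq ?_)
      exact lintegral_congr fun ω => by rw [hsplit ω]
    · intro hint hfin
      have hfin' : (∫⁻ ω, ENNReal.ofReal (max (-(S k ω + ξ i ω * Δ i ω)) 0) ∂Q) ≠ ⊤ := by
        refine ne_of_eq_of_ne ?_ hfin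
        exact lintegral_congr fun ω => by rw [← hsplit ω]
      obtain ⟨hint2, heq2⟩ := hmain.2 hint hfin'
      constructor
      · exact hint2.congr (ae_of_all _ fun ω => (hsplit ω).symm)
      · rw [show (fun ω => S (k + 1) ω) = fun ω => S k ω + ξ i ω * Δ i ω from
          funext hsplit]
        exact heq2
  -- L is monotone along the partition, so L k is finite for all k ≤ n
  have hLn : L n ≠ ⊤ := by
    have h1 : Integrable (fun ω => max (-(S n ω)) 0) Q :=
      hneg.congr (ae_of_all _ fun ω => congrArg (fun x : ℝ => max (-x) 0) (hSn ω))
    have h2 := h1.hasFiniteIntegral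
    rw [hasFiniteIntegral_iff_norm] at h2
    refine ne_of_eq_of_ne ?_ h2.ne
    refine lintegral_congr fun ω => ?_
    rw [Real.norm_eq_abs, abs_of_nonneg (le_max_right _ _)]
  have hLmono : ∀ m : ℕ, m ≤ n → ∀ k : ℕ, k ≤ m → L k ≤ L m := by
    intro m
    induction m with
    | zero =>
      intro _ k hk
      interval_cases k
      exact le_rfl
    | succ m ih =>
      intro hm1 k hk
      rcases Nat.lt_succ_iff_lt_or_eq.mp (Nat.lt_succ_of_le hk) with h | h
      · exact le_trans (ih (Nat.le_of_succ_le hm1) k (Nat.lt_succ_iff.mp h))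
          (hstep m hm1).1
      · rw [h]
  -- upward induction: integrability and zero mean
  have hfinal : ∀ k : ℕ, k ≤ n → Integrable (S k) Q ∧ ∫ ω, S k ω ∂Q = 0 := by
    intro k
    induction k with
    | zero =>
      intro _
      have h0 : S 0 = fun _ => (0 : ℝ) := by funext ω; simp [hS]
      rw [h0]
      exact ⟨integrable_const 0, integral_zero _ _⟩
    | succ k ih =>
      intro hk1
      have hk : k < n := hk1
      obtain ⟨hint, hzero⟩ := ih hk.le
      have hfin : L (k + 1) ≠ ⊤ :=
        ne_top_of_le_ne_top hLn (hLmono n le_rfl (k + 1) hk1)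
      obtain ⟨hint2, heq2⟩ := (hstep k hk).2 hint hfin
      exact ⟨hint2, heq2.trans hzero⟩
  obtain ⟨hint, hzero⟩ := hfinal n le_rfl
  constructor
  · exact hint.congr (ae_of_all _ fun ω => (hSn ω).symm)
  · rw [show (fun ω => ∑ i : Fin n, ξ i ω * (B (t i.succ) ω - B (t i.castSucc) ω))
      = fun ω => S n ω from funext fun ω => hSn ω]
    exact hzero
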